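/- Any two countable X-saturated models of the same complete theory are isomorphic, where X is a fixed Scott set. -/

import Mathlib

open FirstOrder

namespace Paper

universe u v w



/-- A Gödel numbering of bounded formulas of a recursive (encodable) language. -/
noncomputable instance boundedFormulaEncodable (L : FirstOrder.Language.{u, v})
    [∀ n, Encodable (L.Functions n)] [∀ n, Encodable (L.Relations n)]
    (α : Type) [Encodable α] (n : ℕ) : Encodable (L.BoundedFormula α n) :=
  haveI : Countable (Σ k, L.BoundedFormula α k) :=
    Function.Injective.countable
      (f := fun φ : Σ k, L.BoundedFormula α k => φ.2.listEncode)
      Language.BoundedFormula.listEncode_sigma_injective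
  haveI : Countable (L.BoundedFormula α n) :=
    Function.Injective.countable
      (f := fun φ : L.BoundedFormula α n => (⟨n, φ⟩ : Σ k, L.BoundedFormula α k))
      sigma_mk_injective
  Encodable.ofCountable _

variable (L : FirstOrder.Language.{u, v})

section Saturation

variable [∀ n, Encodable (L.Functions n)] [∀ n, Encodable (L.Relations n)]

/-- The set of Gödel numbers of a set of formulas. -/
noncomputable def godelSet {α : Type} [Encodable α] (p : Set (L.Formula α)) : Set ℕ :=
  Encodable.encode '' p

/-- A set of formulas (in a recursive language) is recursive if its set of Gödel
numbers is a computable predicate. -/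
def RecSet {α : Type} [Encodable α] (p : Set (L.Formula α)) : Prop :=
  ComputablePred (· ∈ godelSet L p)

end Saturation

variable (M : Type w) [L.Structure M]

/-- `p(x̄, ā)` is a type over `M` with parameters `ā`: it is finitely satisfiable in `M`
(equivalently, consistent with `Th(M, ā)`). -/
def IsTypeOver {m k : ℕ} (a : Fin k → M) (p : Set (L.Formula (Fin m ⊕ Fin k))) : Prop :=
  ∀ S : Finset (L.Formula (Fin m ⊕ Fin k)), ↑S ⊆ p →
    ∃ x : Fin m → M, ∀ φ ∈ S, φ.Realize (Sum.elim x a)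

/-- The type `p(x̄, ā)` is realized in `M`. -/
def RealizesType {m k : ℕ} (a : Fin k → M) (p : Set (L.Formula (Fin m ⊕ Fin k))) : Prop :=
  ∃ x : Fin m → M, ∀ φ ∈ p, φ.Realize (Sum.elim x a)

/-- `M` is recursively saturated: every recursive type over `M` with finitely many
parameters is realized in `M`. -/
def RecursivelySaturated [∀ n, Encodable (L.Functions n)] [∀ n, Encodable (L.Relations n)] :
    Prop :=
  ∀ (m k : ℕ) (a : Fin k → M) (p : Set (L.Formula (Fin m ⊕ Fin k))),
    RecSet L p → IsTypeOver L M a p → RealizesType L M a p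

/-- The tuples `ā` and `b̄` have the same complete type in `M`. -/
def SameType {k : ℕ} (a b : Fin k → M) : Prop :=
  ∀ φ : L.Formula (Fin k), φ.Realize a ↔ φ.Realize b

/-- `M` is `ω`-homogeneous. -/
def OmegaHomogeneous : Prop :=
  ∀ (k : ℕ) (a b : Fin k → M), SameType L M a b →
    ∀ c : M, ∃ d : M, SameType L M (Fin.snoc a c) (Fin.snoc b d)

/-- `M` is strongly homogeneous: every type-preserving finite tuple correspondence
extends to an automorphism. -/
def StronglyHomogeneous : Prop :=
  ∀ (k : ℕ) (a b : Fin k → M), SameType L M a b →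
    ∃ g : M ≃[L] M, ∀ i, g (a i) = b i

/-- `p(x̄, ā)` is a complete type over `M`. -/
def CompleteTypeOver {m k : ℕ} (a : Fin k → M) (p : Set (L.Formula (Fin m ⊕ Fin k))) : Prop :=
  IsTypeOver L M a p ∧
    ∀ φ : L.Formula (Fin m ⊕ Fin k), φ ∈ p ∨ Language.Formula.not φ ∈ p

/-- `M` is `X`-saturated for a collection `X` of subsets of `ω`: a complete type over
`M` is realized in `M` exactly when the set of Gödel numbers of its parameter-free
version belongs to `X`. -/
def XSaturated [∀ n, Encodable (L.Functions n)] [∀ n, Encodable (L.Relations n)]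
    (X : Set (Set ℕ)) : Prop :=
  ∀ (m k : ℕ) (a : Fin k → M) (p : Set (L.Formula (Fin m ⊕ Fin k))),
    CompleteTypeOver L M a p → (RealizesType L M a p ↔ godelSet L p ∈ X)



/-- Oracle-relative partial recursive functions: `RecursiveIn O f` means that the
partial function `f` is computable relative to the oracle (characteristic function of) `O`. -/
inductive RecursiveIn (O : Set ℕ) : (ℕ →. ℕ) → Prop
  | zero : RecursiveIn O (pure 0)
  | succ : RecursiveIn O ↑Nat.succ
  | left : RecursiveIn O fun n => (Nat.unpair n).1
  | right : RecursiveIn O fun n => (Nat.unpair n).2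
  | oracle : RecursiveIn O fun n => Part.some (O.indicator 1 n)
  | pair {f g} : RecursiveIn O f → RecursiveIn O g →
      RecursiveIn O fun n => Nat.pair <$> f n <*> g n
  | comp {f g} : RecursiveIn O f → RecursiveIn O g →
      RecursiveIn O fun n => g n >>= f
  | prec {f g} : RecursiveIn O f → RecursiveIn O g →
      RecursiveIn O
        (Nat.unpaired fun a n =>
          n.rec (f a) fun y IH => do
            let i ← IH
            g (Nat.pair a (Nat.pair y i)))
  | rfind {f} : RecursiveIn O f →
      RecursiveIn O fun a => Nat.rfind fun n => (fun m => m = 0) <$> f (Nat.pair a n)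

/-- `B` is Turing reducible to `A`: the characteristic function of `B` is
computable with oracle `A`. -/
def TuringReducible (B A : Set ℕ) : Prop :=
  RecursiveIn A fun n => Part.some (B.indicator 1 n)

/-- The set of finite binary strings coded (via `Encodable.encode`) in a set of naturals. -/
def treeStrings (T : Set ℕ) : Set (List Bool) :=
  {s | Encodable.encode s ∈ T}

/-- `T ⊆ ℕ` codes an infinite binary tree: the coded strings are closed under
taking prefixes and there are infinitely many of them. -/
def IsInfiniteBinaryTree (T : Set ℕ) : Prop :=
  (∀ s ∈ treeStrings T, ∀ t : List Bool, t <+: s → t ∈ treeStrings T) ∧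
    (treeStrings T).Infinite

/-- `f : ℕ → Bool` is an infinite path through the binary tree coded by `T`. -/
def IsPathThrough (f : ℕ → Bool) (T : Set ℕ) : Prop :=
  ∀ k : ℕ, ((List.range k).map f) ∈ treeStrings T

/-- A Scott set: a nonempty boolean algebra of subsets of `ω` closed under relative
recursion (Turing reducibility), in which every coded infinite binary tree has an
infinite path (whose corresponding subset of `ω` is in the family). -/
structure IsScottSet (X : Set (Set ℕ)) : Prop where
  nonempty : X.Nonempty
  union_mem : ∀ A ∈ X, ∀ B ∈ X, A ∪ B ∈ X
  compl_mem : ∀ A ∈ X, Aᶜ ∈ X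
  turing_mem : ∀ A ∈ X, ∀ B : Set ℕ, TuringReducible B A → B ∈ X
  tree_path : ∀ T ∈ X, IsInfiniteBinaryTree T →
    ∃ f : ℕ → Bool, IsPathThrough f T ∧ {n | f n = true} ∈ X


-- NEW MATERIAL
/-- Two tuples in possibly different models satisfying the same formulas. -/
def CrossType (N : Type w) [L.Structure N] {k : ℕ} (a : Fin k → M) (b : Fin k → N) : Prop :=
  ∀ φ : L.Formula (Fin k), φ.Realize a ↔ φ.Realize b

lemma crossType_extend [∀ n, Encodable (L.Functions n)] [∀ n, Encodable (L.Relations n)]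
    (X : Set (Set ℕ)) (N : Type w) [L.Structure N]
    (hMX : XSaturated L M X) (hNX : XSaturated L N X)
    {k : ℕ} {a : Fin k → M} {b : Fin k → N} (hab : CrossType L M N a b) (c : M) :
    ∃ d : N, CrossType L M N (Fin.snoc a c) (Fin.snoc b d) := by
  classical
  set p : Set (L.Formula (Fin 1 ⊕ Fin k)) :=
    {φ | φ.Realize (Sum.elim (fun _ => c) a)} with hp
  have hmem : ∀ φ : L.Formula (Fin 1 ⊕ Fin k),
      φ ∈ p ↔ φ.Realize (Sum.elim (fun _ => c) a) := fun φ => Iff.rfl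
  have hcomplete : ∀ φ : L.Formula (Fin 1 ⊕ Fin k), φ ∈ p ∨ Language.Formula.not φ ∈ p := by
    intro φ
    by_cases h : φ.Realize (Sum.elim (fun _ => c) a)
    · exact Or.inl h
    · exact Or.inr (Language.Formula.realize_not.mpr h)
  have hpM : CompleteTypeOver L M a p :=
    ⟨fun S hS => ⟨fun _ => c, fun φ hφ => hS hφ⟩, hcomplete⟩
  have hgodel : godelSet L p ∈ X :=
    (hMX 1 k a p hpM).mp ⟨fun _ => c, fun φ hφ => hφ⟩
  -- p is a type over N with parameters b
  have hpN : CompleteTypeOver L N b p := by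
    refine ⟨fun S hS => ?_, hcomplete⟩
    set χ : L.Formula (Fin 1 ⊕ Fin k) := Language.BoundedFormula.iInf (fun φ : S => φ.1) with hχ
    set ψ : L.Formula (Fin k) := (Language.Formula.relabel Sum.swap χ).iExs (Fin 1) with hψ
    have hψM : ψ.Realize a := by
      rw [hψ, Language.Formula.realize_iExs]
      refine ⟨fun _ => c, ?_⟩
      rw [Language.Formula.realize_relabel, Function.comp_def]
      have : (fun z : Fin 1 ⊕ Fin k => Sum.elim a (fun _ => c) (Sum.swap z)) = Sum.elim (fun _ => c) a := by
        funext z; cases z <;> rfl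
      rw [this]
      exact (Language.Formula.realize_iInf (f := fun φ : S => φ.1)).mpr (fun φ => hS φ.2)
    have hψN : ψ.Realize b := (hab ψ).mp hψM
    rw [hψ, Language.Formula.realize_iExs] at hψN
    obtain ⟨x, hx⟩ := hψN
    refine ⟨x, fun φ hφ => ?_⟩
    have : (fun z : Fin 1 ⊕ Fin k => Sum.elim b x (Sum.swap z)) = Sum.elim x b := by
      funext z; cases z <;> rfl
    rw [Language.Formula.realize_relabel, Function.comp_def] at hx
    rw [this] at hx
    exact (Language.Formula.realize_iInf (f := fun φ : S => φ.1)).mp hx ⟨φ, hφ⟩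
  have hreal : RealizesType L N b p := (hNX 1 k b p hpN).mpr hgodel
  obtain ⟨x, hx⟩ := hreal
  refine ⟨x 0, ?_⟩
  intro φ
  set ρ : Fin (k + 1) → Fin 1 ⊕ Fin k := Fin.lastCases (Sum.inl 0) Sum.inr with hρ
  have hMconv : (Sum.elim (fun _ => c) a) ∘ ρ = Fin.snoc a c := by
    funext i
    refine Fin.lastCases ?_ (fun j => ?_) i <;>
      simp [hρ, Fin.snoc_last, Fin.snoc_castSucc]
  have hNconv : (Sum.elim x b) ∘ ρ = Fin.snoc b (x 0) := by
    funext i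
    refine Fin.lastCases ?_ (fun j => ?_) i
    · simp only [Function.comp_apply, hρ, Fin.lastCases_last, Sum.elim_inl, Fin.snoc_last]
    · simp [hρ, Fin.snoc_castSucc]
  have hM' : φ.Realize (Fin.snoc a c) ↔ (φ.relabel ρ).Realize (Sum.elim (fun _ => c) a) := by
    rw [Language.Formula.realize_relabel, hMconv]
  have hN' : φ.Realize (Fin.snoc b (x 0)) ↔ (φ.relabel ρ).Realize (Sum.elim x b) := by
    rw [Language.Formula.realize_relabel, hNconv]
  rw [hM', hN']
  rcases hcomplete (φ.relabel ρ) with h | h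
  · exact iff_of_true h (hx _ h)
  · refine iff_of_false ?_ ?_
    · exact Language.Formula.realize_not.mp h
    · exact Language.Formula.realize_not.mp (hx _ h)




lemma snoc_mk_lt' {α : Type*} {n : ℕ} (f : Fin n → α) (x : α) (i : ℕ) (h : i < n)
    (h2 : i < n + 1) : (Fin.snoc f x : Fin (n + 1) → α) ⟨i, h2⟩ = f ⟨i, h⟩ := by
  have : (⟨i, h2⟩ : Fin (n + 1)) = (⟨i, h⟩ : Fin n).castSucc := rfl
  rw [this, Fin.snoc_castSucc]

lemma snoc_mk_last' {α : Type*} {n : ℕ} (f : Fin n → α) (x : α) (h2 : n < n + 1) :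
    (Fin.snoc f x : Fin (n + 1) → α) ⟨n, h2⟩ = x := by
  have : (⟨n, h2⟩ : Fin (n + 1)) = Fin.last n := rfl
  rw [this, Fin.snoc_last]

/-- The back-and-forth chain. -/
noncomputable def chainAux (N : Type w) [L.Structure N]
    (eM : ℕ → M) (eN : ℕ → N)
    (step1 : ∀ (k : ℕ) (a : Fin k → M) (b : Fin k → N), CrossType L M N a b →
      ∀ c : M, ∃ d : N, CrossType L M N (Fin.snoc a c) (Fin.snoc b d))
    (step2 : ∀ (k : ℕ) (a : Fin k → M) (b : Fin k → N), CrossType L M N a b →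
      ∀ d : N, ∃ c : M, CrossType L M N (Fin.snoc a c) (Fin.snoc b d))
    (base : CrossType L M N Fin.elim0 Fin.elim0) :
    (n : ℕ) → {ab : (Fin (2 * n) → M) × (Fin (2 * n) → N) // CrossType L M N ab.1 ab.2}
  | 0 => ⟨(Fin.elim0, Fin.elim0), base⟩
  | n + 1 =>
    let prev := chainAux N eM eN step1 step2 base n
    let h1 := step1 _ prev.1.1 prev.1.2 prev.2 (eM n)
    let h2 := step2 _ _ _ (Classical.choose_spec h1) (eN n)
    ⟨(Fin.snoc (Fin.snoc prev.1.1 (eM n)) (Classical.choose h2),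
      Fin.snoc (Fin.snoc prev.1.2 (Classical.choose h1)) (eN n)), Classical.choose_spec h2⟩

lemma chainAux_succ (N : Type w) [L.Structure N]
    (eM : ℕ → M) (eN : ℕ → N) (step1) (step2) (base) (n : ℕ) :
    ∃ (cM : M) (cN : N),
      (chainAux L M N eM eN step1 step2 base (n + 1)).1.1
        = Fin.snoc (Fin.snoc (chainAux L M N eM eN step1 step2 base n).1.1 (eM n)) cM ∧
      (chainAux L M N eM eN step1 step2 base (n + 1)).1.2
        = Fin.snoc (Fin.snoc (chainAux L M N eM eN step1 step2 base n).1.2 cN) (eN n) :=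
  ⟨_, _, rfl, rfl⟩

lemma nonempty_equiv_of_cross (N : Type w) [L.Structure N] [Countable M] [Countable N]
    [Nonempty M] [Nonempty N]
    (step1 : ∀ (k : ℕ) (a : Fin k → M) (b : Fin k → N), CrossType L M N a b →
      ∀ c : M, ∃ d : N, CrossType L M N (Fin.snoc a c) (Fin.snoc b d))
    (step2 : ∀ (k : ℕ) (a : Fin k → M) (b : Fin k → N), CrossType L M N a b →
      ∀ d : N, ∃ c : M, CrossType L M N (Fin.snoc a c) (Fin.snoc b d))
    (base : CrossType L M N Fin.elim0 Fin.elim0) :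
    Nonempty (M ≃[L] N) := by
  classical
  obtain ⟨eM, heM⟩ := exists_surjective_nat M
  obtain ⟨eN, heN⟩ := exists_surjective_nat N
  set ch := chainAux L M N eM eN step1 step2 base with hch
  set A : ∀ n : ℕ, Fin (2 * n) → M := fun n => (ch n).1.1 with hA
  set B : ∀ n : ℕ, Fin (2 * n) → N := fun n => (ch n).1.2 with hB
  have cross : ∀ n, CrossType L M N (A n) (B n) := fun n => (ch n).2
  choose cM cN hA1 hB1 using chainAux_succ L M N eM eN step1 step2 base
  rw [← hch] at hA1 hB1
  -- one-step compatibility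
  have hAstep : ∀ (n : ℕ) (i : ℕ) (h : i < 2 * n) (h2 : i < 2 * (n + 1)),
      A (n + 1) ⟨i, h2⟩ = A n ⟨i, h⟩ := by
    intro n i h h2
    have e1 := congrFun (hA1 n) ⟨i, h2⟩
    simp only [hA]
    rw [e1, snoc_mk_lt' _ _ i (h.trans (Nat.lt_succ_self _)), snoc_mk_lt' _ _ i h]
  have hBstep : ∀ (n : ℕ) (i : ℕ) (h : i < 2 * n) (h2 : i < 2 * (n + 1)),
      B (n + 1) ⟨i, h2⟩ = B n ⟨i, h⟩ := by
    intro n i h h2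
    have e1 := congrFun (hB1 n) ⟨i, h2⟩
    simp only [hB]
    rw [e1, snoc_mk_lt' _ _ i (h.trans (Nat.lt_succ_self _)), snoc_mk_lt' _ _ i h]
  have hmono : ∀ (n n' : ℕ), n ≤ n' → ∀ (i : ℕ) (h : i < 2 * n) (h' : i < 2 * n'),
      A n' ⟨i, h'⟩ = A n ⟨i, h⟩ ∧ B n' ⟨i, h'⟩ = B n ⟨i, h⟩ := by
    intro n n' hle
    induction n', hle using Nat.le_induction with
    | base => intro i h h'; exact ⟨rfl, rfl⟩
    | succ n' hle ih =>
      intro i h h'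
      have hi' : i < 2 * n' := lt_of_lt_of_le h (Nat.mul_le_mul_left 2 hle)
      exact ⟨(hAstep n' i hi' h').trans (ih i h hi').1,
        (hBstep n' i hi' h').trans (ih i h hi').2⟩
  -- coverage
  have hcovM : ∀ j : ℕ, A (j + 1) ⟨2 * j, by omega⟩ = eM j := by
    intro j
    have e1 := congrFun (hA1 j) ⟨2 * j, by omega⟩
    simp only [hA]
    rw [e1, snoc_mk_lt' _ _ (2 * j) (Nat.lt_succ_self _)]
    exact snoc_mk_last' _ _ _
  have hcovN : ∀ j : ℕ, B (j + 1) ⟨2 * j + 1, by omega⟩ = eN j := by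
    intro j
    have e1 := congrFun (hB1 j) ⟨2 * j + 1, by omega⟩
    simp only [hB]
    rw [e1]
    exact snoc_mk_last' _ _ _
  -- within one stage
  have stageA : ∀ (n : ℕ) (i j : Fin (2 * n)), A n i = A n j → B n i = B n j := by
    intro n i j hij
    have h1 : ((Language.Term.var i).equal (Language.Term.var j) :
        L.Formula (Fin (2 * n))).Realize (A n) := by
      simp [Language.Formula.realize_equal, Language.Term.realize, hij]
    have h2 := (cross n _).mp h1
    simpa [Language.Formula.realize_equal, Language.Term.realize] using h2
  have stageB : ∀ (n : ℕ) (i j : Fin (2 * n)), B n i = B n j → A n i = A n j := by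
    intro n i j hij
    have h1 : ((Language.Term.var i).equal (Language.Term.var j) :
        L.Formula (Fin (2 * n))).Realize (B n) := by
      simp [Language.Formula.realize_equal, Language.Term.realize, hij]
    have h2 := (cross n _).mpr h1
    simpa [Language.Formula.realize_equal, Language.Term.realize] using h2
  -- across stages
  have globA : ∀ (n : ℕ) (i : ℕ) (hi : i < 2 * n) (n' : ℕ) (j : ℕ) (hj : j < 2 * n'),
      A n ⟨i, hi⟩ = A n' ⟨j, hj⟩ → B n ⟨i, hi⟩ = B n' ⟨j, hj⟩ := by
    intro n i hi n' j hj hEq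
    have hi' : i < 2 * max n n' := lt_of_lt_of_le hi (Nat.mul_le_mul_left 2 (le_max_left _ _))
    have hj' : j < 2 * max n n' := lt_of_lt_of_le hj (Nat.mul_le_mul_left 2 (le_max_right _ _))
    obtain ⟨eA1, eB1⟩ := hmono n _ (le_max_left n n') i hi hi'
    obtain ⟨eA2, eB2⟩ := hmono n' _ (le_max_right n n') j hj hj'
    rw [← eB1, ← eB2]
    exact stageA _ _ _ (by rw [eA1, eA2]; exact hEq)
  have globB : ∀ (n : ℕ) (i : ℕ) (hi : i < 2 * n) (n' : ℕ) (j : ℕ) (hj : j < 2 * n'),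
      B n ⟨i, hi⟩ = B n' ⟨j, hj⟩ → A n ⟨i, hi⟩ = A n' ⟨j, hj⟩ := by
    intro n i hi n' j hj hEq
    have hi' : i < 2 * max n n' := lt_of_lt_of_le hi (Nat.mul_le_mul_left 2 (le_max_left _ _))
    have hj' : j < 2 * max n n' := lt_of_lt_of_le hj (Nat.mul_le_mul_left 2 (le_max_right _ _))
    obtain ⟨eA1, eB1⟩ := hmono n _ (le_max_left n n') i hi hi'
    obtain ⟨eA2, eB2⟩ := hmono n' _ (le_max_right n n') j hj hj'
    rw [← eA1, ← eA2]
    exact stageB _ _ _ (by rw [eB1, eB2]; exact hEq)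
  -- the maps
  have hrepM : ∀ x : M, ∃ (n : ℕ) (i : ℕ) (h : i < 2 * n), A n ⟨i, h⟩ = x := by
    intro x
    obtain ⟨j, rfl⟩ := heM x
    exact ⟨j + 1, 2 * j, by omega, hcovM j⟩
  have hrepN : ∀ y : N, ∃ (n : ℕ) (i : ℕ) (h : i < 2 * n), B n ⟨i, h⟩ = y := by
    intro y
    obtain ⟨j, rfl⟩ := heN y
    exact ⟨j + 1, 2 * j + 1, by omega, hcovN j⟩
  choose nF iF hF hAF using hrepM
  choose nG iG hG hBG using hrepN
  set F : M → N := fun x => B (nF x) ⟨iF x, hF x⟩ with hFdef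
  set G : N → M := fun y => A (nG y) ⟨iG y, hG y⟩ with hGdef
  have Fspec : ∀ (n : ℕ) (i : ℕ) (h : i < 2 * n), F (A n ⟨i, h⟩) = B n ⟨i, h⟩ := by
    intro n i h
    exact globA _ _ _ n i h (hAF (A n ⟨i, h⟩))
  have Gspec : ∀ (n : ℕ) (i : ℕ) (h : i < 2 * n), G (B n ⟨i, h⟩) = A n ⟨i, h⟩ := by
    intro n i h
    exact globB _ _ _ n i h (hBG (B n ⟨i, h⟩))
  have hGF : ∀ x : M, G (F x) = x := by
    intro x
    have : F x = B (nF x) ⟨iF x, hF x⟩ := rfl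
    rw [this, Gspec (nF x) (iF x) (hF x), hAF x]
  have hFG : ∀ y : N, F (G y) = y := by
    intro y
    have : G y = A (nG y) ⟨iG y, hG y⟩ := rfl
    rw [this, Fspec (nG y) (iG y) (hG y), hBG y]
  refine ⟨⟨⟨F, G, hGF, hFG⟩, ?_, ?_⟩⟩
  · intro l f x
    set m0 := Language.Structure.funMap f x with hm0
    obtain ⟨K, h0, ht⟩ : ∃ K : ℕ, nF m0 ≤ K ∧ ∀ t, nF (x t) ≤ K :=
      ⟨max (nF m0) (Finset.univ.sup fun t => nF (x t)), le_max_left _ _,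
        fun t => le_trans (Finset.le_sup (f := fun t => nF (x t)) (Finset.mem_univ t))
          (le_max_right _ _)⟩
    have hi0 : iF m0 < 2 * K := lt_of_lt_of_le (hF m0) (Nat.mul_le_mul_left 2 h0)
    have hit : ∀ t, iF (x t) < 2 * K :=
      fun t => lt_of_lt_of_le (hF (x t)) (Nat.mul_le_mul_left 2 (ht t))
    have hA0 : A K ⟨iF m0, hi0⟩ = m0 := by
      rw [(hmono (nF m0) K h0 _ (hF m0) hi0).1, hAF]
    have hAt : ∀ t, A K ⟨iF (x t), hit t⟩ = x t := by
      intro t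
      rw [(hmono (nF (x t)) K (ht t) _ (hF (x t)) (hit t)).1, hAF]
    set φ : L.Formula (Fin (2 * K)) :=
      (Language.Term.func f (fun t => Language.Term.var ⟨iF (x t), hit t⟩)).equal
        (Language.Term.var ⟨iF m0, hi0⟩) with hφ
    have hφM : φ.Realize (A K) := by
      rw [hφ, Language.Formula.realize_equal]
      show Language.Structure.funMap f (fun t => (A K) ⟨iF (x t), hit t⟩) = A K ⟨iF m0, hi0⟩
      rw [hA0, funext hAt]
    have hφN := (cross K φ).mp hφM
    rw [hφ, Language.Formula.realize_equal] at hφN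
    have hφN' : Language.Structure.funMap f (fun t => (B K) ⟨iF (x t), hit t⟩)
        = B K ⟨iF m0, hi0⟩ := hφN
    show F m0 = Language.Structure.funMap f (F ∘ x)
    rw [← hA0, Fspec K _ hi0, ← hφN']
    congr 1
    funext t
    have hs := Fspec K (iF (x t)) (hit t)
    rw [hAt t] at hs
    rw [Function.comp_apply, ← hs]
  · intro l r x
    obtain ⟨K, ht⟩ : ∃ K : ℕ, ∀ t, nF (x t) ≤ K :=
      ⟨Finset.univ.sup fun t : Fin l => nF (x t),
        fun t => Finset.le_sup (f := fun t => nF (x t)) (Finset.mem_univ t)⟩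
    have hit : ∀ t, iF (x t) < 2 * K :=
      fun t => lt_of_lt_of_le (hF (x t)) (Nat.mul_le_mul_left 2 (ht t))
    have hAt : ∀ t, A K ⟨iF (x t), hit t⟩ = x t := by
      intro t
      rw [(hmono (nF (x t)) K (ht t) _ (hF (x t)) (hit t)).1, hAF]
    set φ : L.Formula (Fin (2 * K)) :=
      Language.Relations.formula r (fun t => Language.Term.var ⟨iF (x t), hit t⟩) with hφ
    have h1 : φ.Realize (A K) ↔ Language.Structure.RelMap r x := by
      rw [hφ, Language.Formula.realize_rel]
      exact iff_of_eq (congrArg _ (funext hAt))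
    have h2 : φ.Realize (B K) ↔ Language.Structure.RelMap r (F ∘ x) := by
      rw [hφ, Language.Formula.realize_rel]
      refine iff_of_eq (congrArg _ (funext fun t => ?_))
      show (B K) ⟨iF (x t), hit t⟩ = F (x t)
      have hs := Fspec K (iF (x t)) (hit t)
      rw [hAt t] at hs
      rw [← hs]
    exact h2.symm.trans ((cross K φ).symm.trans h1)


/-- Any two countable `X`-saturated models of the same complete theory
are isomorphic, where `X` is a fixed Scott set. -/
theorem countable_xSaturated_isomorphic
    (L : FirstOrder.Language.{u, v}) [∀ n, Encodable (L.Functions n)]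
    [∀ n, Encodable (L.Relations n)]
    (X : Set (Set ℕ)) (hX : IsScottSet X)
    (M N : Type w) [L.Structure M] [L.Structure N] [Countable M] [Countable N]
    (hMN : M ≅[L] N)
    (hM : XSaturated L M X) (hN : XSaturated L N X) :
    Nonempty (M ≃[L] N) := by
  classical
  have hsent : Nonempty M ↔ Nonempty N := by
    have h := hMN.realize_sentence
      (Language.BoundedFormula.ex (⊤ : L.BoundedFormula Empty 1))
    simp only [Language.Sentence.Realize, Language.Formula.Realize,
      Language.BoundedFormula.realize_ex, Language.BoundedFormula.realize_top,
      exists_true_iff_nonempty] at h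
    exact h
  rcases isEmpty_or_nonempty M with hM0 | hM1
  · haveI hN0 : IsEmpty N :=
      not_nonempty_iff.mp (fun hn => (not_nonempty_iff.mpr hM0) (hsent.mpr hn))
    refine ⟨⟨Equiv.equivOfIsEmpty M N, ?_, ?_⟩⟩
    · intro n f xs
      exact (hM0.false (Language.Structure.funMap f xs)).elim
    · intro n r xs
      cases n with
      | zero =>
        have h := hMN.realize_sentence
          (Language.Relations.formula r (fun i : Fin 0 => i.elim0))
        simp only [Language.Sentence.Realize, Language.Formula.realize_rel] at h
        have kM : ∀ u v : Fin 0 → M,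
            Language.Structure.RelMap r u ↔ Language.Structure.RelMap r v := by
          intro u v
          rw [(funext (fun i => i.elim0) : u = v)]
        have kN : ∀ u v : Fin 0 → N,
            Language.Structure.RelMap r u ↔ Language.Structure.RelMap r v := by
          intro u v
          rw [(funext (fun i => i.elim0) : u = v)]
        exact (kN _ _).trans (h.symm.trans (kM _ _))
      | succ n => exact (hM0.false (xs 0)).elim
  · haveI hN1 : Nonempty N := hsent.mp hM1
    refine nonempty_equiv_of_cross L M N ?_ ?_ ?_
    · exact fun k a b hab c => crossType_extend L M X N hM hN hab c
    · intro k a b hab d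
      obtain ⟨c, hc⟩ := crossType_extend L N X M hN hM (fun φ => (hab φ).symm) d
      exact ⟨c, fun φ => (hc φ).symm⟩
    · intro φ
      have h := hMN.realize_sentence (φ.relabel (Fin.elim0 : Fin 0 → Empty))
      simp only [Language.Sentence.Realize, Language.Formula.realize_relabel] at h
      have eM : ((default : Empty → M) ∘ (Fin.elim0 : Fin 0 → Empty))
          = (Fin.elim0 : Fin 0 → M) := funext fun i => i.elim0
      have eN : ((default : Empty → N) ∘ (Fin.elim0 : Fin 0 → Empty))
          = (Fin.elim0 : Fin 0 → N) := funext fun i => i.elim0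
      rw [eM, eN] at h
      exact h

end Paper
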